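/- Let κ > 0, γ > 0, and θ = 2/κ. Define G(iω) = −2i/(iω + κ/2) for ω ∈ ℝ. Then for all ω ∈ ℝ, γ + (1 + θ i ω) G(iω) + (1 − θ i ω) conj(G(iω)) > 0 (as a real number). -/
import Mathlib


open Complex

/-- The Popov frequency-domain condition for the Kerr-cavity example:
with `θ = 2/κ`, for every `γ > 0`, `κ > 0` and every `ω ∈ ℝ`,
`γ + (1 + θ i ω) G(iω) + (1 − θ i ω) conj(G(iω)) > 0` as a real number. -/
theorem kerr_popov_condition (κ γ : ℝ) (hκ : 0 < κ) (hγ : 0 < γ) (ω : ℝ) :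
    0 < ((γ : ℂ) + (1 + (2 / κ : ℝ) * (ω : ℂ) * I) * (-2 * I / (I * (ω : ℂ) + (κ : ℂ) / 2))
        + (1 - (2 / κ : ℝ) * (ω : ℂ) * I) *
          (starRingEnd ℂ) (-2 * I / (I * (ω : ℂ) + (κ : ℂ) / 2))).re
    ∧ ((γ : ℂ) + (1 + (2 / κ : ℝ) * (ω : ℂ) * I) * (-2 * I / (I * (ω : ℂ) + (κ : ℂ) / 2))
        + (1 - (2 / κ : ℝ) * (ω : ℂ) * I) *
          (starRingEnd ℂ) (-2 * I / (I * (ω : ℂ) + (κ : ℂ) / 2))).im = 0 := by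
  have hκc : (κ : ℂ) ≠ 0 := Complex.ofReal_ne_zero.mpr hκ.ne'
  have hd : (I * (ω : ℂ) + (κ : ℂ) / 2) ≠ 0 := by
    intro h
    have := congrArg Complex.re h
    simp [Complex.add_re, Complex.div_re] at this
    exact hκ.ne' this
  have hd' : (-(I * (ω : ℂ)) + (κ : ℂ) / 2) ≠ 0 := by
    intro h
    have := congrArg Complex.re h
    simp [Complex.add_re, Complex.div_re] at this
    exact hκ.ne' this
  have h2 : (starRingEnd ℂ) (2 : ℂ) = 2 := map_ofNat _ 2
  have conjG : (starRingEnd ℂ) (-2 * I / (I * (ω : ℂ) + (κ : ℂ) / 2))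
      = (2 * I) / (-(I * (ω : ℂ)) + (κ : ℂ) / 2) := by
    rw [map_div₀]
    congr 1
    · simp [Complex.conj_I, Complex.conj_ofNat]
    · simp only [map_add, map_mul, map_div₀, Complex.conj_I, Complex.conj_ofReal,
        Complex.conj_ofNat]
      ring
  have key : ((γ : ℂ) + (1 + (2 / κ : ℝ) * (ω : ℂ) * I) * (-2 * I / (I * (ω : ℂ) + (κ : ℂ) / 2))
        + (1 - (2 / κ : ℝ) * (ω : ℂ) * I) *
          (starRingEnd ℂ) (-2 * I / (I * (ω : ℂ) + (κ : ℂ) / 2))) = (γ : ℂ) := by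
    rw [conjG, add_assoc]
    have main : (1 + ((2 / κ : ℝ) : ℂ) * (ω : ℂ) * I) * (-2 * I / (I * (ω : ℂ) + (κ : ℂ) / 2))
        + (1 - ((2 / κ : ℝ) : ℂ) * (ω : ℂ) * I) * (2 * I / (-(I * (ω : ℂ)) + (κ : ℂ) / 2))
        = 0 := by
      rw [mul_div_assoc', mul_div_assoc', div_add_div _ _ hd hd', div_eq_zero_iff]
      left
      push_cast
      field_simp
      ring
    rw [main, add_zero]
  rw [key]
  simpa using hγ
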